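/- Under the node-parameter assumption ‖A_ext0‖₁ ≤ 2δ, the matrices A and A' = V^{-1}Ã'V satisfy A - A' = A_ext0 W₂V₂ and hence ‖A - A'‖₁ ≤ 4δ. -/

import Mathlib

open Matrix

variable {r : ℕ} (nn : Fin r → ℕ)

/-- The pages: group `i` has `nn i` members. -/
abbrev Pages (nn : Fin r → ℕ) := (i : Fin r) × Fin (nn i)

/-- Row indices for `V₂`: `nn i - 1` rows per group. -/
abbrev Rows (nn : Fin r → ℕ) := (i : Fin r) × Fin (nn i - 1)

/-- `V₁ = bdiag(1_{ñᵢ}ᵀ)`: sums page values within each group. -/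
def V1 : Matrix (Fin r) (Pages nn) ℝ := fun g p => if p.1 = g then 1 else 0

/-- `W₁ = bdiag((1/ñᵢ)1_{ñᵢ})`: distributes a group value uniformly. -/
noncomputable def W1 : Matrix (Pages nn) (Fin r) ℝ := fun p g => if p.1 = g then ((nn g : ℝ))⁻¹ else 0

/-- `V₂ = bdiag([I_{ñᵢ-1} 0] - (1/ñᵢ)1_{ñᵢ-1}1_{ñᵢ}ᵀ)`. -/
noncomputable def V2 : Matrix (Rows nn) (Pages nn) ℝ := fun a p =>
  if p.1 = a.1 then (if (p.2 : ℕ) = (a.2 : ℕ) then 1 else 0) - ((nn p.1 : ℝ))⁻¹ else 0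

/-- `W₂ = bdiag([I_{ñᵢ-1}; -1_{ñᵢ-1}ᵀ])`. -/
def W2 : Matrix (Pages nn) (Rows nn) ℝ := fun p a =>
  if p.1 = a.1 then
    (if (p.2 : ℕ) = (a.2 : ℕ) then 1 else if (p.2 : ℕ) = nn p.1 - 1 then -1 else 0)
  else 0

/-- Column stochastic: nonnegative entries, each column sums to 1. -/
def ColStoch {α β : Type*} [Fintype α] (M : Matrix α β ℝ) : Prop :=
  (∀ i j, 0 ≤ M i j) ∧ ∀ j, ∑ i, M i j = 1

/-- Induced matrix 1-norm: maximum absolute column sum. -/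
noncomputable def mnorm1 {α β : Type*} [Fintype α] [Fintype β]
    (M : Matrix α β ℝ) : ℝ := ⨆ j, ∑ i, |M i j|

lemma W1V1_apply (p q : Pages nn) :
    (W1 nn * V1 nn) p q = if p.1 = q.1 then ((nn p.1 : ℝ))⁻¹ else 0 := by
  classical
  simp only [Matrix.mul_apply, W1, V1]
  rw [Finset.sum_eq_single p.1]
  · by_cases h : p.1 = q.1 <;> simp [h, eq_comm]
  · intro b _ hb; simp [Ne.symm hb]
  · simp

lemma W2V2_apply (hnn : ∀ i, 1 ≤ nn i) (p q : Pages nn) :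
    (W2 nn * V2 nn) p q =
      if p.1 = q.1 then (if (p.2 : ℕ) = (q.2 : ℕ) then 1 else 0) - ((nn p.1 : ℝ))⁻¹ else 0 := by
  classical
  obtain ⟨i, x⟩ := p
  obtain ⟨j, y⟩ := q
  rw [Matrix.mul_apply]
  have hsig : (∑ a : Rows nn, W2 nn ⟨i,x⟩ a * V2 nn a ⟨j,y⟩)
      = ∑ b : Fin r, ∑ k : Fin (nn b - 1), W2 nn ⟨i,x⟩ ⟨b,k⟩ * V2 nn ⟨b,k⟩ ⟨j,y⟩ :=
    Finset.sum_sigma _ _ _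
  rw [hsig]
  by_cases hij : i = j
  · subst hij
    rw [Finset.sum_eq_single i]
    · have hW : ∀ k : Fin (nn i - 1), W2 nn ⟨i,x⟩ ⟨i,k⟩
          = (if (x:ℕ) = (k:ℕ) then (1:ℝ) else if (x:ℕ) = nn i - 1 then -1 else 0) :=
        fun k => by simp [W2]
      have hV : ∀ k : Fin (nn i - 1), V2 nn ⟨i,k⟩ ⟨i,y⟩
          = ((if (y:ℕ) = (k:ℕ) then (1:ℝ) else 0) - ((nn i : ℝ))⁻¹) :=
        fun k => by simp [V2]
      have hrhs : (if (⟨i,x⟩ : Pages nn).1 = (⟨i,y⟩ : Pages nn).1 then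
          (if ((⟨i,x⟩ : Pages nn).2 : ℕ) = ((⟨i,y⟩ : Pages nn).2 : ℕ) then (1:ℝ) else 0)
            - ((nn (⟨i,x⟩ : Pages nn).1 : ℝ))⁻¹ else 0)
          = (if (x:ℕ) = (y:ℕ) then (1:ℝ) else 0) - ((nn i : ℝ))⁻¹ := by
        rw [if_pos rfl]
      rw [hrhs, Finset.sum_congr rfl (fun k _ => by rw [hW k, hV k])]
      have hn : (0:ℝ) < (nn i : ℝ) := by exact_mod_cast (hnn i)
      by_cases hx : (x:ℕ) = nn i - 1
      · have hxk : ∀ k : Fin (nn i - 1), ¬ ((x:ℕ) = (k:ℕ)) := by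
          intro k; have := k.2; omega
        have hterm : ∀ k ∈ (Finset.univ : Finset (Fin (nn i - 1))),
            (if (x:ℕ) = (k:ℕ) then (1:ℝ) else if (x:ℕ) = nn i - 1 then -1 else 0)
              * ((if (y:ℕ) = (k:ℕ) then (1:ℝ) else 0) - ((nn i : ℝ))⁻¹)
            = ((nn i : ℝ))⁻¹ - (if (y:ℕ) = (k:ℕ) then (1:ℝ) else 0) := by
          intro k _; rw [if_neg (hxk k), if_pos hx]; ring
        rw [Finset.sum_congr rfl hterm, Finset.sum_sub_distrib, Finset.sum_const,
          Finset.card_univ, Fintype.card_fin]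
        have hcast : ((nn i - 1 : ℕ) : ℝ) = (nn i : ℝ) - 1 := by
          have := hnn i; push_cast [this]; ring
        by_cases hy : (y:ℕ) = nn i - 1
        · have hyk : ∀ k : Fin (nn i - 1), ¬ ((y:ℕ) = (k:ℕ)) := by
            intro k; have := k.2; omega
          have hxy : (x:ℕ) = (y:ℕ) := by omega
          rw [Finset.sum_eq_zero (fun k _ => if_neg (hyk k)), if_pos hxy,
            nsmul_eq_mul, hcast]
          field_simp
          ring
        · have hy' : (y:ℕ) < nn i - 1 := by have := y.2; omega
          have hxy : ¬ ((x:ℕ) = (y:ℕ)) := by omega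
          have hsum1 : ∑ k : Fin (nn i - 1), (if (y:ℕ) = (k:ℕ) then (1:ℝ) else 0) = 1 := by
            rw [Finset.sum_eq_single (⟨(y:ℕ), hy'⟩ : Fin (nn i - 1))]
            · simp
            · intro k _ hk
              exact if_neg (fun h => hk (Fin.ext h.symm))
            · simp
          rw [hsum1, if_neg hxy, nsmul_eq_mul, hcast]
          field_simp
          ring
      · have hx' : (x:ℕ) < nn i - 1 := by have := x.2; omega
        rw [Finset.sum_eq_single (⟨(x:ℕ), hx'⟩ : Fin (nn i - 1))]
        · rw [if_pos rfl]
          by_cases hxy : (x:ℕ) = (y:ℕ) <;> simp [hxy, eq_comm]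
        · intro k _ hk
          rw [if_neg (fun h => hk (Fin.ext h.symm)), if_neg hx]; ring
        · simp
    · intro b _ hb
      simp [W2, Ne.symm hb]
    · simp
  · rw [Finset.sum_eq_zero, if_neg hij]
    intro b _
    rcases eq_or_ne i b with rfl | hb
    · rw [Finset.sum_eq_zero]; intro k _; simp [V2, Ne.symm hij]
    · rw [Finset.sum_eq_zero]; intro k _; simp [W2, hb]

lemma key1 (hnn : ∀ i, 1 ≤ nn i) :
    W1 nn * V1 nn + W2 nn * V2 nn = (1 : Matrix (Pages nn) (Pages nn) ℝ) := by
  ext p q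
  rw [Matrix.add_apply, W1V1_apply, W2V2_apply nn hnn, Matrix.one_apply]
  obtain ⟨i, x⟩ := p
  obtain ⟨j, y⟩ := q
  by_cases hij : i = j
  · subst hij
    rw [if_pos rfl, if_pos rfl]
    have hxy : (⟨i, x⟩ : Pages nn) = ⟨i, y⟩ ↔ (x:ℕ) = (y:ℕ) := by
      constructor
      · intro h; rw [Sigma.mk.inj_iff] at h; rw [eq_of_heq h.2]
      · intro h; exact congrArg _ (Fin.ext h)
    by_cases h : (x:ℕ) = (y:ℕ)
    · rw [if_pos h, if_pos (hxy.mpr h)]; ring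
    · rw [if_neg h, if_neg (fun hh => h (hxy.mp hh))]; ring
  · rw [if_neg hij, if_neg hij, if_neg (fun h => hij (congrArg Sigma.fst h))]; ring

lemma key2 (Aint : Matrix (Pages nn) (Pages nn) ℝ)
    (hblock : ∀ p q : Pages nn, p.1 ≠ q.1 → Aint p q = 0)
    (hstoch : ColStoch (1 + Aint)) :
    V1 nn * Aint = 0 := by
  ext g q
  rw [Matrix.mul_apply, Matrix.zero_apply]
  have hc : ∑ p, Aint p q = 0 := by
    have h1 := hstoch.2 q
    simp only [Matrix.add_apply, Matrix.one_apply, Finset.sum_add_distrib] at h1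
    rw [Finset.sum_ite_eq' Finset.univ q (fun _ => (1:ℝ))] at h1
    simp at h1
    linarith
  by_cases hg : g = q.1
  · subst hg
    calc ∑ p, V1 nn q.1 p * Aint p q = ∑ p, Aint p q := by
          apply Finset.sum_congr rfl
          intro p _
          by_cases hp : p.1 = q.1
          · simp [V1, hp]
          · simp [V1, hp, hblock p q hp]
      _ = 0 := hc
  · apply Finset.sum_eq_zero
    intro p _
    by_cases hp : p.1 = g
    · rw [hblock p q (by rw [hp]; exact hg), mul_zero]
    · simp [V1, hp]

lemma W2V2_colsum (hnn : ∀ i, 1 ≤ nn i) (q : Pages nn) :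
    ∑ p, |(W2 nn * V2 nn) p q| ≤ 2 := by
  classical
  have hb : ∀ p : Pages nn, |(W2 nn * V2 nn) p q|
      ≤ (if p = q then 1 else 0) + (if p.1 = q.1 then ((nn q.1 : ℝ))⁻¹ else 0) := by
    intro p
    rw [W2V2_apply nn hnn]
    obtain ⟨i, x⟩ := p; obtain ⟨j, y⟩ := q
    by_cases h1 : i = j
    · subst h1
      rw [if_pos rfl, if_pos rfl]
      have hinv : (0:ℝ) ≤ ((nn i : ℝ))⁻¹ := by positivity
      have hinv1 : ((nn i : ℝ))⁻¹ ≤ 1 := by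
        have h1 : (1:ℝ) ≤ (nn i : ℝ) := by exact_mod_cast hnn i
        rw [inv_le_one_iff₀] <;> right <;> linarith
      have hpq : ((x : ℕ) = (y : ℕ)) ↔ (⟨i, x⟩ : Pages nn) = ⟨i, y⟩ := by
        constructor
        · intro h; exact congrArg _ (Fin.ext h)
        · intro h
          rw [Sigma.mk.inj_iff] at h
          rw [eq_of_heq h.2]
      by_cases h2 : (x : ℕ) = (y : ℕ)
      · rw [if_pos h2, if_pos (hpq.mp h2)]
        rw [abs_sub_comm, abs_sub_le_iff]
        constructor <;> simp <;> linarith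
      · rw [if_neg h2, if_neg (fun h => h2 (hpq.mpr h))]
        rw [zero_sub, abs_neg, abs_of_nonneg hinv]
        linarith
    · rw [if_neg h1, if_neg h1,
        if_neg (fun h => h1 (congrArg Sigma.fst h)), abs_zero]
      norm_num
  calc ∑ p, |(W2 nn * V2 nn) p q|
      ≤ ∑ p, ((if p = q then 1 else 0) + (if p.1 = q.1 then ((nn q.1 : ℝ))⁻¹ else 0)) :=
        Finset.sum_le_sum (fun p _ => hb p)
    _ = (∑ p : Pages nn, (if p = q then (1:ℝ) else 0))
        + ∑ p : Pages nn, (if p.1 = q.1 then ((nn q.1 : ℝ))⁻¹ else 0) := Finset.sum_add_distrib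
    _ ≤ 2 := by
        rw [Finset.sum_ite_eq' Finset.univ q (fun _ => (1:ℝ))]
        have h2 : ∑ p : Pages nn, (if p.1 = q.1 then ((nn q.1 : ℝ))⁻¹ else 0) = 1 := by
          have hs : (∑ p : Pages nn, (if p.1 = q.1 then ((nn q.1 : ℝ))⁻¹ else 0))
              = ∑ i : Fin r, ∑ x : Fin (nn i),
                  (if (⟨i, x⟩ : Pages nn).1 = q.1 then ((nn q.1 : ℝ))⁻¹ else 0) :=
            Finset.sum_sigma _ _ _
          rw [hs, Finset.sum_eq_single q.1]
          · simp only [if_pos rfl]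
            rw [Finset.sum_const, Finset.card_univ, Fintype.card_fin, nsmul_eq_mul]
            have : (nn q.1 : ℝ) ≠ 0 := by
              have := hnn q.1; positivity
            field_simp
            simp [this]
          · intro b _ hbne
            exact Finset.sum_eq_zero (fun x _ => if_neg hbne)
          · simp
        rw [h2]
        norm_num
theorem stmt10 {r : ℕ} (nn : Fin r → ℕ) (hnn : ∀ i, 1 ≤ nn i)
    (A Aint Aext Aext0 : Matrix (Pages nn) (Pages nn) ℝ)
    (hA : ColStoch A) (hdecomp : A = 1 + Aint + Aext)
    (hblock : ∀ p q : Pages nn, p.1 ≠ q.1 → Aint p q = 0)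
    (hstoch : ColStoch (1 + Aint))
    (hAext0 : Aext * W2 nn = Aext0 * W2 nn)
    (δ : ℝ) (hδ : 0 < δ) (hnorm : mnorm1 Aext0 ≤ 2 * δ)
    (A' : Matrix (Pages nn) (Pages nn) ℝ)
    (hA' : A' = W1 nn * (V1 nn * A * W1 nn) * V1 nn
              + W2 nn * (V2 nn * A * W1 nn) * V1 nn
              + W2 nn * ((1 : Matrix (Rows nn) (Rows nn) ℝ) + V2 nn * Aint * W2 nn) * V2 nn) :
    A - A' = Aext0 * (W2 nn * V2 nn) ∧ mnorm1 (A - A') ≤ 4 * δ := by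
  classical
  have hPQ := key1 nn hnn
  have hQ : (1 : Matrix (Pages nn) (Pages nn) ℝ) - W1 nn * V1 nn = W2 nn * V2 nn := by
    rw [← hPQ]; abel
  have hP : (1 : Matrix (Pages nn) (Pages nn) ℝ) - W2 nn * V2 nn = W1 nn * V1 nn := by
    rw [← hPQ]; abel
  have hb0 : W1 nn * (V1 nn * Aint) = 0 := by
    rw [key2 nn Aint hblock hstoch, Matrix.mul_zero]
  have hA'2 : A' = A * (W1 nn * V1 nn) + (W2 nn * V2 nn
      + (W2 nn * V2 nn) * (Aint * (W2 nn * V2 nn))) := by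
    rw [hA']
    have e1 : W1 nn * (V1 nn * A * W1 nn) * V1 nn + W2 nn * (V2 nn * A * W1 nn) * V1 nn
        = (W1 nn * V1 nn + W2 nn * V2 nn) * (A * (W1 nn * V1 nn)) := by
      simp only [Matrix.add_mul, Matrix.mul_assoc]
    have e2 : W2 nn * ((1 : Matrix (Rows nn) (Rows nn) ℝ) + V2 nn * Aint * W2 nn) * V2 nn
        = W2 nn * V2 nn + (W2 nn * V2 nn) * (Aint * (W2 nn * V2 nn)) := by
      simp only [Matrix.mul_add, Matrix.add_mul, Matrix.mul_one, Matrix.one_mul,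
        Matrix.mul_assoc]
    rw [← add_assoc, e1, e2, hPQ, Matrix.one_mul, add_assoc]
  have hAQ : A * (W2 nn * V2 nn) = W2 nn * V2 nn + Aint * (W2 nn * V2 nn)
      + Aext0 * (W2 nn * V2 nn) := by
    rw [hdecomp, Matrix.add_mul, Matrix.add_mul, Matrix.one_mul]
    congr 1
    rw [← Matrix.mul_assoc, hAext0, Matrix.mul_assoc]
  have hzero : Aint * (W2 nn * V2 nn)
      - (W2 nn * V2 nn) * (Aint * (W2 nn * V2 nn)) = 0 := by
    have e3 : Aint * (W2 nn * V2 nn) - (W2 nn * V2 nn) * (Aint * (W2 nn * V2 nn))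
        = ((1 : Matrix (Pages nn) (Pages nn) ℝ) - W2 nn * V2 nn)
          * (Aint * (W2 nn * V2 nn)) := by
      rw [Matrix.sub_mul, Matrix.one_mul]
    rw [e3, hP]
    calc (W1 nn * V1 nn) * (Aint * (W2 nn * V2 nn))
        = (W1 nn * (V1 nn * Aint)) * (W2 nn * V2 nn) := by
          simp only [Matrix.mul_assoc]
      _ = 0 := by rw [hb0, Matrix.zero_mul]
  have main : A - A' = Aext0 * (W2 nn * V2 nn) := by
    have hAP : A - A * (W1 nn * V1 nn) = A * (W2 nn * V2 nn) := by
      rw [← hQ, Matrix.mul_sub, Matrix.mul_one]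
    calc A - A'
        = (A - A * (W1 nn * V1 nn)) - (W2 nn * V2 nn
            + (W2 nn * V2 nn) * (Aint * (W2 nn * V2 nn))) := by rw [hA'2]; abel
      _ = (W2 nn * V2 nn + Aint * (W2 nn * V2 nn) + Aext0 * (W2 nn * V2 nn))
            - (W2 nn * V2 nn + (W2 nn * V2 nn) * (Aint * (W2 nn * V2 nn))) := by
          rw [hAP, hAQ]
      _ = (Aint * (W2 nn * V2 nn) - (W2 nn * V2 nn) * (Aint * (W2 nn * V2 nn)))
            + Aext0 * (W2 nn * V2 nn) := by abel
      _ = Aext0 * (W2 nn * V2 nn) := by rw [hzero, zero_add]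
  refine ⟨main, ?_⟩
  rw [main]
  simp only [mnorm1] at hnorm ⊢
  have hcolA : ∀ k, ∑ i, |Aext0 i k| ≤ 2 * δ := fun k =>
    le_trans (le_ciSup (f := fun j => ∑ i, |Aext0 i j|)
      (Set.Finite.bddAbove (Set.finite_range _)) k) hnorm
  apply Real.iSup_le _ (by linarith)
  intro q
  calc ∑ p, |(Aext0 * (W2 nn * V2 nn)) p q|
      ≤ ∑ p, ∑ k, |Aext0 p k| * |(W2 nn * V2 nn) k q| := by
        apply Finset.sum_le_sum
        intro p _
        rw [Matrix.mul_apply]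
        refine le_trans (Finset.abs_sum_le_sum_abs _ _) ?_
        simp [abs_mul]
    _ = ∑ k, (∑ p, |Aext0 p k|) * |(W2 nn * V2 nn) k q| := by
        rw [Finset.sum_comm]
        simp [Finset.sum_mul]
    _ ≤ ∑ k, (2 * δ) * |(W2 nn * V2 nn) k q| := by
        apply Finset.sum_le_sum
        intro k _
        exact mul_le_mul_of_nonneg_right (hcolA k) (abs_nonneg _)
    _ = (2 * δ) * ∑ k, |(W2 nn * V2 nn) k q| := by rw [Finset.mul_sum]
    _ ≤ (2 * δ) * 2 := mul_le_mul_of_nonneg_left (W2V2_colsum nn hnn q) (by linarith)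
    _ = 4 * δ := by ring
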